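/- For every compactum X, the convexity C_{∪X} on the space M_∪X of possibility capacities is normal: for every two disjoint members C₁, C₂ of C_{∪X} there exist S₁, S₂ ∈ C_{∪X} with S₁ ∪ S₂ = M_∪X, C₁ ∩ S₂ = ∅ and C₂ ∩ S₁ = ∅. -/

import Mathlib

open Set TopologicalSpace

universe u v

/-- A (upper-semicontinuous) capacity on a topological space `X`:
a normalized monotone set function on the closed subsets, upper semicontinuous
in the sense of Zarichnyi–Nykyforchyn. -/
structure Capacity (X : Type u) [TopologicalSpace X] : Type u where
  toFun : Closeds X → ℝ
  empty' : toFun ⊥ = 0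
  univ' : toFun ⊤ = 1
  mono' : ∀ F G : Closeds X, F ≤ G → toFun F ≤ toFun G
  usc' : ∀ (F : Closeds X) (a : ℝ), toFun F < a →
    ∃ O : Set X, IsOpen O ∧ (F : Set X) ⊆ O ∧ ∀ B : Closeds X, (B : Set X) ⊆ O → toFun B < a

namespace Capacity

variable {X : Type u} [TopologicalSpace X]

/-- Value of a capacity on (the closure of) an arbitrary set; on closed sets this is
the value of the capacity. -/
def cval (ν : Capacity X) (A : Set X) : ℝ := ν.toFun ⟨closure A, isClosed_closure⟩

/-- The sup-extension of a capacity to open sets: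
`ν(U) = sup {ν K : K closed, K ⊆ U}`. -/
noncomputable def oval (ν : Capacity X) (U : Set X) : ℝ :=
  sSup {r : ℝ | ∃ K : Closeds X, (K : Set X) ⊆ U ∧ ν.toFun K = r}

end Capacity

/-- The topology on the space `MX` of capacities, generated by the subbase
`O₋(F,a) = {c : c(F) < a}` (`F` closed) and `O₊(U,a) = {c : c(U) > a}` (`U` open). -/
instance capacityTopology (X : Type u) [TopologicalSpace X] : TopologicalSpace (Capacity X) :=
  TopologicalSpace.generateFrom
    ({S | ∃ (F : Closeds X) (a : ℝ), a ∈ Icc (0:ℝ) 1 ∧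
        S = {c : Capacity X | c.toFun F < a}} ∪
     {S | ∃ U : Set X, IsOpen U ∧ ∃ a ∈ Icc (0:ℝ) 1,
        S = {c : Capacity X | a < c.oval U}})

/-- A possibility capacity: `ν(A ∪ B) = max (ν A) (ν B)` on closed sets. -/
def IsPossibility {X : Type u} [TopologicalSpace X] (ν : Capacity X) : Prop :=
  ∀ A B : Closeds X, ν.toFun (A ⊔ B) = max (ν.toFun A) (ν.toFun B)

/-- A necessity capacity: `ν(A ∩ B) = min (ν A) (ν B)` on closed sets. -/
def IsNecessity {X : Type u} [TopologicalSpace X] (ν : Capacity X) : Prop :=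
  ∀ A B : Closeds X, ν.toFun (A ⊓ B) = min (ν.toFun A) (ν.toFun B)

/-- A triangular norm on `[0,1]`. -/
structure Tnorm : Type where
  toFun : ℝ → ℝ → ℝ
  mem' : ∀ s ∈ Icc (0:ℝ) 1, ∀ t ∈ Icc (0:ℝ) 1, toFun s t ∈ Icc (0:ℝ) 1
  comm' : ∀ s ∈ Icc (0:ℝ) 1, ∀ t ∈ Icc (0:ℝ) 1, toFun s t = toFun t s
  assoc' : ∀ s ∈ Icc (0:ℝ) 1, ∀ t ∈ Icc (0:ℝ) 1, ∀ r ∈ Icc (0:ℝ) 1,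
    toFun (toFun s t) r = toFun s (toFun t r)
  mono' : ∀ s₁ ∈ Icc (0:ℝ) 1, ∀ s₂ ∈ Icc (0:ℝ) 1, ∀ t₁ ∈ Icc (0:ℝ) 1, ∀ t₂ ∈ Icc (0:ℝ) 1,
    s₁ ≤ s₂ → t₁ ≤ t₂ → toFun s₁ t₁ ≤ toFun s₂ t₂
  one' : ∀ s ∈ Icc (0:ℝ) 1, toFun s 1 = s

/-- Continuity of a t-norm (on the unit square). -/
def Tnorm.Cont (star : Tnorm) : Prop :=
  ContinuousOn (fun q : ℝ × ℝ => star.toFun q.1 q.2) (Icc 0 1 ×ˢ Icc 0 1)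

/-- The t-normed (fuzzy) integral `∫^{∨∗} f dν = sup { ν(f⁻¹[t,1]) ∗ t : t ∈ [0,1] }`. -/
noncomputable def tInt {X : Type u} [TopologicalSpace X] (star : Tnorm) (ν : Capacity X) (f : X → ℝ) : ℝ :=
  sSup {r : ℝ | ∃ t ∈ Icc (0:ℝ) 1, r = star.toFun (ν.cval (f ⁻¹' Icc t 1)) t}
/-- The convexity `C_{∪X}` on the space `M_∪X` of possibility capacities: a set `A` of
possibility capacities belongs to it iff it is empty, or it is nonempty, closed and
equals `[⋀A, ⋁A] ∩ M_∪X` (pointwise order interval between the pointwise infimum and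
supremum of `A`). -/
def InConvexU {X : Type u} [TopologicalSpace X] (A : Set (Capacity X)) : Prop :=
  A = ∅ ∨ (A.Nonempty ∧ IsClosed A ∧ (∀ ν ∈ A, IsPossibility ν) ∧
    A = {α : Capacity X | IsPossibility α ∧ ∀ F : Closeds X,
      sInf ((fun ν : Capacity X => ν.toFun F) '' A) ≤ α.toFun F ∧
      α.toFun F ≤ sSup ((fun ν : Capacity X => ν.toFun F) '' A)})
namespace PCaux

open TopologicalSpace Set Capacity

variable {X : Type u} [TopologicalSpace X]

lemma cap_nonneg (ν : Capacity X) (F : Closeds X) : 0 ≤ ν.toFun F := by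
  have h := ν.mono' ⊥ F bot_le
  rwa [ν.empty'] at h

lemma cap_le_one (ν : Capacity X) (F : Closeds X) : ν.toFun F ≤ 1 := by
  have h := ν.mono' F ⊤ le_top
  rwa [ν.univ'] at h

lemma oval_bddAbove (ν : Capacity X) (U : Set X) :
    BddAbove {r : ℝ | ∃ K : Closeds X, (K : Set X) ⊆ U ∧ ν.toFun K = r} := by
  refine ⟨1, ?_⟩
  rintro r ⟨K, -, rfl⟩
  exact cap_le_one ν K

lemma le_oval (ν : Capacity X) {U : Set X} {K : Closeds X} (h : (K : Set X) ⊆ U) :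
    ν.toFun K ≤ ν.oval U :=
  le_csSup (oval_bddAbove ν U) ⟨K, h, rfl⟩

lemma oval_le (ν : Capacity X) {U : Set X} {a : ℝ} (ha : 0 ≤ a)
    (h : ∀ K : Closeds X, (K : Set X) ⊆ U → ν.toFun K ≤ a) : ν.oval U ≤ a := by
  refine Real.sSup_le ?_ ha
  rintro r ⟨K, hK, rfl⟩
  exact h K hK

lemma exists_of_lt_oval {ν : Capacity X} {U : Set X} {a : ℝ} (h : a < ν.oval U) :
    ∃ K : Closeds X, (K : Set X) ⊆ U ∧ a < ν.toFun K := by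
  have hne : {r : ℝ | ∃ K : Closeds X, (K : Set X) ⊆ U ∧ ν.toFun K = r}.Nonempty :=
    ⟨ν.toFun ⊥, ⊥, by simp, rfl⟩
  obtain ⟨r, ⟨K, hK, rfl⟩, hr⟩ := exists_lt_of_lt_csSup hne h
  exact ⟨K, hK, hr⟩

lemma isOpen_Ominus (F : Closeds X) {a : ℝ} (ha : a ∈ Icc (0:ℝ) 1) :
    IsOpen {c : Capacity X | c.toFun F < a} :=
  TopologicalSpace.GenerateOpen.basic _ (Or.inl ⟨F, a, ha, rfl⟩)

lemma isOpen_Oplus {U : Set X} (hU : IsOpen U) {a : ℝ} (ha : a ∈ Icc (0:ℝ) 1) :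
    IsOpen {c : Capacity X | a < c.oval U} :=
  TopologicalSpace.GenerateOpen.basic _ (Or.inr ⟨U, hU, a, ha, rfl⟩)

/-- Join (pointwise max) of two capacities. -/
def join (ν μ : Capacity X) : Capacity X where
  toFun F := max (ν.toFun F) (μ.toFun F)
  empty' := by simp [ν.empty', μ.empty']
  univ' := by simp [ν.univ', μ.univ']
  mono' F G h := max_le_max (ν.mono' F G h) (μ.mono' F G h)
  usc' F a h := by
    obtain ⟨O₁, hO₁, hF₁, h₁⟩ := ν.usc' F a (lt_of_le_of_lt (le_max_left _ _) h)
    obtain ⟨O₂, hO₂, hF₂, h₂⟩ := μ.usc' F a (lt_of_le_of_lt (le_max_right _ _) h)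
    exact ⟨O₁ ∩ O₂, hO₁.inter hO₂, subset_inter hF₁ hF₂,
      fun B hB => max_lt (h₁ B (hB.trans inter_subset_left)) (h₂ B (hB.trans inter_subset_right))⟩

lemma join_poss {ν μ : Capacity X} (hν : IsPossibility ν) (hμ : IsPossibility μ) :
    IsPossibility (join ν μ) := by
  intro A B
  show max (ν.toFun (A ⊔ B)) (μ.toFun (A ⊔ B)) = _
  rw [hν, hμ, max_max_max_comm]
  rfl

end PCaux
namespace PCaux

open TopologicalSpace Set Capacity

variable {X : Type u} [TopologicalSpace X]

lemma sSup_image_bddAbove {f : X → ℝ} (h1 : ∀ x, f x ≤ 1) (S : Set X) :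
    BddAbove (f '' S) := by
  refine ⟨1, ?_⟩
  rintro r ⟨x, -, rfl⟩
  exact h1 x

lemma sSup_image_nonneg {f : X → ℝ} (h0 : ∀ x, 0 ≤ f x) (S : Set X) :
    0 ≤ sSup (f '' S) := by
  refine Real.sSup_nonneg ?_
  rintro r ⟨x, -, rfl⟩
  exact h0 x

/-- The possibility capacity with (usc) density `f`. -/
noncomputable def capOfDensity (f : X → ℝ) (h0 : ∀ x, 0 ≤ f x) (h1 : ∀ x, f x ≤ 1)
    (husc : ∀ a : ℝ, IsOpen {x | f x < a}) (hsup : sSup (f '' univ) = 1) : Capacity X where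
  toFun F := sSup (f '' (F : Set X))
  empty' := by
    show sSup (f '' (((⊥ : Closeds X)) : Set X)) = 0
    have h : (((⊥ : Closeds X)) : Set X) = ∅ := rfl
    rw [h, image_empty, Real.sSup_empty]
  univ' := by
    show sSup (f '' (((⊤ : Closeds X)) : Set X)) = 1
    have h : (((⊤ : Closeds X)) : Set X) = univ := rfl
    rw [h, hsup]
  mono' F G h := by
    refine Real.sSup_le ?_ (sSup_image_nonneg h0 _)
    rintro r ⟨x, hx, rfl⟩
    exact le_csSup (sSup_image_bddAbove h1 _) ⟨x, h hx, rfl⟩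
  usc' F a h := by
    set a' := (sSup (f '' (F : Set X)) + a) / 2 with ha'
    have h0' : 0 ≤ sSup (f '' (F : Set X)) := sSup_image_nonneg h0 _
    have hlt : sSup (f '' (F : Set X)) < a' := by rw [ha']; linarith
    have hlt2 : a' < a := by rw [ha']; linarith
    refine ⟨{x | f x < a'}, husc a', ?_, ?_⟩
    · intro x hx
      exact lt_of_le_of_lt (le_csSup (sSup_image_bddAbove h1 _) ⟨x, hx, rfl⟩) hlt
    · intro B hB
      refine lt_of_le_of_lt (Real.sSup_le ?_ (by linarith)) hlt2
      rintro r ⟨x, hx, rfl⟩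
      exact le_of_lt (hB hx)

lemma capOfDensity_apply (f : X → ℝ) (h0 : ∀ x, 0 ≤ f x) (h1 : ∀ x, f x ≤ 1)
    (husc : ∀ a : ℝ, IsOpen {x | f x < a}) (hsup : sSup (f '' univ) = 1) (F : Closeds X) :
    (capOfDensity f h0 h1 husc hsup).toFun F = sSup (f '' (F : Set X)) := rfl

lemma capOfDensity_poss (f : X → ℝ) (h0 : ∀ x, 0 ≤ f x) (h1 : ∀ x, f x ≤ 1)
    (husc : ∀ a : ℝ, IsOpen {x | f x < a}) (hsup : sSup (f '' univ) = 1) :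
    IsPossibility (capOfDensity f h0 h1 husc hsup) := by
  intro A B
  show sSup (f '' ((A ⊔ B : Closeds X) : Set X)) = _
  rw [Closeds.coe_sup, image_union]
  apply le_antisymm
  · refine Real.sSup_le ?_ (le_trans (sSup_image_nonneg h0 (A : Set X)) (le_max_left _ _))
    rintro r (hr | hr)
    · exact le_trans (le_csSup (sSup_image_bddAbove h1 _) hr) (le_max_left _ _)
    · exact le_trans (le_csSup (sSup_image_bddAbove h1 _) hr) (le_max_right _ _)
  · refine max_le ?_ ?_ <;>
    · refine Real.sSup_le ?_ (Real.sSup_nonneg ?_)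
      · rintro r ⟨x, hx, rfl⟩
        refine le_csSup ?_ ?_
        · refine ⟨1, ?_⟩
          rintro s (⟨y, -, rfl⟩ | ⟨y, -, rfl⟩) <;> exact h1 y
        · first
          | exact Or.inl ⟨x, hx, rfl⟩
          | exact Or.inr ⟨x, hx, rfl⟩
      · rintro r (⟨y, -, rfl⟩ | ⟨y, -, rfl⟩) <;> exact h0 y

end PCaux
namespace PCaux

open TopologicalSpace Set Capacity

variable {X : Type u} [TopologicalSpace X]

lemma poss_finset_sup_lt {ν : Capacity X} (hν : IsPossibility ν) {a : ℝ} (ha : 0 < a)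
    {ι : Type v} (s : Finset ι) (f : ι → Closeds X) (h : ∀ i ∈ s, ν.toFun (f i) < a) :
    ν.toFun (s.sup f) < a := by
  classical
  induction s using Finset.induction with
  | empty => simpa [ν.empty'] using ha
  | insert b t hx ih =>
    rw [Finset.sup_insert, hν]
    exact max_lt (h b (Finset.mem_insert_self b t))
      (ih fun i hi => h i (Finset.mem_insert_of_mem hi))

variable [T2Space X] [CompactSpace X]

/-- Singleton as a closed set. -/
def sc (x : X) : Closeds X := ⟨{x}, isClosed_singleton⟩

/-- A possibility capacity is determined by its density: `ν F = sup_{x ∈ F} ν {x}`. -/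
lemma poss_toFun_eq_sSup_density {ν : Capacity X} (hν : IsPossibility ν) (F : Closeds X) :
    ν.toFun F = sSup ((fun x => ν.toFun (sc x)) '' (F : Set X)) := by
  have hbdd : BddAbove ((fun x => ν.toFun (sc x)) '' (F : Set X)) := by
    refine ⟨1, ?_⟩; rintro r ⟨x, -, rfl⟩; exact cap_le_one ν _
  have hnn : 0 ≤ sSup ((fun x => ν.toFun (sc x)) '' (F : Set X)) := by
    refine Real.sSup_nonneg ?_; rintro r ⟨x, -, rfl⟩; exact cap_nonneg ν _
  refine le_antisymm ?_ ?_
  swap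
  · refine Real.sSup_le ?_ (cap_nonneg ν F)
    rintro r ⟨x, hx, rfl⟩
    refine ν.mono' _ _ ?_
    intro y hy
    have : y = x := hy
    rw [this]; exact hx
  by_contra hcon
  push_neg at hcon
  set S := sSup ((fun x => ν.toFun (sc x)) '' (F : Set X)) with hS
  set t := ν.toFun F with ht
  have htpos : 0 < t := lt_of_le_of_lt hnn hcon
  -- choose for each x ∈ F an open set from usc
  have hP : ∀ x : (F : Set X), ∃ O : Set X, IsOpen O ∧ (x : X) ∈ O ∧
      ∀ B : Closeds X, (B : Set X) ⊆ O → ν.toFun B < t := by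
    rintro ⟨x, hx⟩
    have hlt : ν.toFun (sc x) < t :=
      lt_of_le_of_lt (le_csSup hbdd ⟨x, hx, rfl⟩) hcon
    obtain ⟨O, hO, hsub, hB⟩ := ν.usc' (sc x) t hlt
    exact ⟨O, hO, hsub rfl, hB⟩
  choose O hOopen hOmem hOB using hP
  have hcF : IsCompact (F : Set X) := F.2.isCompact
  obtain ⟨s, hs⟩ := hcF.elim_finite_subcover O hOopen
    (fun x hx => mem_iUnion.2 ⟨⟨x, hx⟩, hOmem ⟨x, hx⟩⟩)
  obtain ⟨K, hKc, hKO, hKeq⟩ := hcF.finite_compact_cover s O (fun i _ => hOopen i) hs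
  set fK : {x // x ∈ (F : Set X)} → Closeds X := fun i => ⟨K i, (hKc i).isClosed⟩ with hfK
  have hcoe : ((s.sup fK : Closeds X) : Set X) = ⋃ i ∈ s, K i := by
    rw [Closeds.coe_finset_sup, Finset.sup_set_eq_biUnion]
    rfl
  have hFeq : F = s.sup fK := by
    apply SetLike.coe_injective
    rw [hcoe, ← hKeq]
  have : ν.toFun F < t := by
    rw [hFeq]
    exact poss_finset_sup_lt hν htpos s fK fun i hi => hOB i (fK i) (hKO i)
  exact absurd this (by rw [← ht]; exact lt_irrefl t)

end PCaux
namespace PCaux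

open TopologicalSpace Set Capacity

variable {X : Type u} [TopologicalSpace X] [T2Space X] [CompactSpace X]

lemma isClosed_poss : IsClosed {ν : Capacity X | IsPossibility ν} := by
  rw [← isOpen_compl_iff]
  rw [isOpen_iff_forall_mem_open]
  intro ν hν
  simp only [mem_compl_iff, mem_setOf_eq, IsPossibility] at hν
  push_neg at hν
  obtain ⟨A, B, hAB⟩ := hν
  have hge : max (ν.toFun A) (ν.toFun B) ≤ ν.toFun (A ⊔ B) :=
    max_le (ν.mono' _ _ le_sup_left) (ν.mono' _ _ le_sup_right)
  have hgt : max (ν.toFun A) (ν.toFun B) < ν.toFun (A ⊔ B) := lt_of_le_of_ne hge (Ne.symm hAB)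
  set m := max (ν.toFun A) (ν.toFun B) with hm
  set v := ν.toFun (A ⊔ B) with hv
  have hm0 : 0 ≤ m := le_trans (cap_nonneg ν A) (le_max_left _ _)
  have hv1 : v ≤ 1 := cap_le_one ν _
  set a := m + (v - m) / 3 with ha
  set b := m + 2 * ((v - m) / 3) with hb
  have hma : m < a := by rw [ha]; nlinarith
  have hab : a < b := by rw [ha, hb]; nlinarith
  have hbv : b < v := by rw [hb]; nlinarith
  have haI : a ∈ Icc (0:ℝ) 1 := ⟨by nlinarith, by nlinarith⟩
  have hbI : b ∈ Icc (0:ℝ) 1 := ⟨by nlinarith, by nlinarith⟩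
  obtain ⟨OA, hOAo, hOAs, hOAb⟩ := ν.usc' A a (lt_of_le_of_lt (le_max_left _ _) hma)
  obtain ⟨OB, hOBo, hOBs, hOBb⟩ := ν.usc' B a (lt_of_le_of_lt (le_max_right _ _) hma)
  obtain ⟨uA, huAo, huAs, huAc⟩ := normal_exists_closure_subset A.2 hOAo hOAs
  obtain ⟨uB, huBo, huBs, huBc⟩ := normal_exists_closure_subset B.2 hOBo hOBs
  set GA : Closeds X := ⟨closure uA, isClosed_closure⟩ with hGA
  set GB : Closeds X := ⟨closure uB, isClosed_closure⟩ with hGB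
  refine ⟨{c : Capacity X | c.toFun GA < a} ∩ {c : Capacity X | c.toFun GB < a} ∩
      {c : Capacity X | b < c.oval (uA ∪ uB)}, ?_, ?_, ?_⟩
  · -- contained in the complement of the possibility capacities
    rintro μ ⟨⟨hμA, hμB⟩, hμU⟩
    simp only [mem_compl_iff, mem_setOf_eq]
    intro hposs
    obtain ⟨K, hKU, hKgt⟩ := exists_of_lt_oval hμU
    obtain ⟨K₁, K₂, hK₁c, hK₂c, hK₁s, hK₂s, hKeq⟩ :=
      (K.2.isCompact).binary_compact_cover huAo huBo hKU
    have hKK : K = (⟨K₁, hK₁c.isClosed⟩ : Closeds X) ⊔ ⟨K₂, hK₂c.isClosed⟩ :=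
      SetLike.coe_injective (by rw [Closeds.coe_sup]; exact hKeq)
    rw [hKK, hposs] at hKgt
    have h1 : μ.toFun ⟨K₁, hK₁c.isClosed⟩ < a := lt_of_le_of_lt
      (μ.mono' _ GA (hK₁s.trans subset_closure)) hμA
    have h2 : μ.toFun ⟨K₂, hK₂c.isClosed⟩ < a := lt_of_le_of_lt
      (μ.mono' _ GB (hK₂s.trans subset_closure)) hμB
    have := max_lt h1 h2
    linarith [hKgt]
  · exact ((isOpen_Ominus GA haI).inter (isOpen_Ominus GB haI)).inter
      (isOpen_Oplus (huAo.union huBo) hbI)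
  · refine ⟨⟨?_, ?_⟩, ?_⟩
    · exact lt_of_le_of_lt (le_of_eq rfl) (hOAb GA huAc)
    · exact lt_of_le_of_lt (le_of_eq rfl) (hOBb GB huBc)
    · refine lt_of_lt_of_le hbv (le_oval ν ?_)
      rw [Closeds.coe_sup]
      exact union_subset (huAs.trans subset_union_left) (huBs.trans subset_union_right)

end PCaux
namespace PCaux

open TopologicalSpace Set Capacity

variable {X : Type u} [TopologicalSpace X]

/-- Pointwise supremum of values over a family of capacities. -/
noncomputable def sVal (C : Set (Capacity X)) (F : Closeds X) : ℝ :=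
  sSup ((fun ν : Capacity X => ν.toFun F) '' C)

/-- Pointwise infimum of values over a family of capacities. -/
noncomputable def iVal (C : Set (Capacity X)) (F : Closeds X) : ℝ :=
  sInf ((fun ν : Capacity X => ν.toFun F) '' C)

lemma val_imageBddAbove (C : Set (Capacity X)) (F : Closeds X) :
    BddAbove ((fun ν : Capacity X => ν.toFun F) '' C) := by
  refine ⟨1, ?_⟩; rintro r ⟨ν, -, rfl⟩; exact cap_le_one ν F

lemma val_imageBddBelow (C : Set (Capacity X)) (F : Closeds X) :
    BddBelow ((fun ν : Capacity X => ν.toFun F) '' C) := by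
  refine ⟨0, ?_⟩; rintro r ⟨ν, -, rfl⟩; exact cap_nonneg ν F

lemma le_sVal {C : Set (Capacity X)} {ν : Capacity X} (hν : ν ∈ C) (F : Closeds X) :
    ν.toFun F ≤ sVal C F :=
  le_csSup (val_imageBddAbove C F) ⟨ν, hν, rfl⟩

lemma iVal_le {C : Set (Capacity X)} {ν : Capacity X} (hν : ν ∈ C) (F : Closeds X) :
    iVal C F ≤ ν.toFun F :=
  csInf_le (val_imageBddBelow C F) ⟨ν, hν, rfl⟩

lemma sVal_nonneg (C : Set (Capacity X)) (F : Closeds X) : 0 ≤ sVal C F := by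
  refine Real.sSup_nonneg ?_; rintro r ⟨ν, -, rfl⟩; exact cap_nonneg ν F

lemma sVal_le_one (C : Set (Capacity X)) (F : Closeds X) : sVal C F ≤ 1 := by
  refine Real.sSup_le ?_ zero_le_one; rintro r ⟨ν, -, rfl⟩; exact cap_le_one ν F

lemma iVal_nonneg {C : Set (Capacity X)} (hne : C.Nonempty) (F : Closeds X) : 0 ≤ iVal C F := by
  refine le_csInf (hne.image _) ?_; rintro r ⟨ν, -, rfl⟩; exact cap_nonneg ν F

lemma iVal_le_one {C : Set (Capacity X)} (hne : C.Nonempty) (F : Closeds X) : iVal C F ≤ 1 := by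
  obtain ⟨ν, hν⟩ := hne
  exact le_trans (iVal_le hν F) (cap_le_one ν F)

lemma iVal_top {C : Set (Capacity X)} (hne : C.Nonempty) : iVal C ⊤ = 1 := by
  refine le_antisymm (iVal_le_one hne ⊤) ?_
  refine le_csInf (hne.image _) ?_
  rintro r ⟨ν, -, rfl⟩
  show 1 ≤ ν.toFun ⊤
  rw [ν.univ']

variable [T2Space X] [CompactSpace X]

/-- Pointwise supremum of densities. -/
noncomputable def gd (C : Set (Capacity X)) (x : X) : ℝ := sVal C (sc x)

lemma gd_nonneg (C : Set (Capacity X)) (x : X) : 0 ≤ gd C x := sVal_nonneg C _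
lemma gd_le_one (C : Set (Capacity X)) (x : X) : gd C x ≤ 1 := sVal_le_one C _

lemma sVal_eq_sup_gd {C : Set (Capacity X)} (hposs : ∀ ν ∈ C, IsPossibility ν)
    (F : Closeds X) : sVal C F = sSup (gd C '' (F : Set X)) := by
  refine le_antisymm ?_ ?_
  · refine Real.sSup_le ?_ (sSup_image_nonneg (gd_nonneg C) _)
    rintro r ⟨ν, hν, rfl⟩
    show ν.toFun F ≤ _
    rw [poss_toFun_eq_sSup_density (hposs ν hν) F]
    refine Real.sSup_le ?_ (sSup_image_nonneg (gd_nonneg C) _)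
    rintro r ⟨x, hx, rfl⟩
    exact le_trans (le_sVal hν (sc x)) (le_csSup (sSup_image_bddAbove (gd_le_one C) _) ⟨x, hx, rfl⟩)
  · refine Real.sSup_le ?_ (sVal_nonneg C F)
    rintro r ⟨x, hx, rfl⟩
    show gd C x ≤ _
    refine Real.sSup_le ?_ (sVal_nonneg C F)
    rintro r ⟨ν, hν, rfl⟩
    show ν.toFun (sc x) ≤ _
    refine le_trans (ν.mono' (sc x) F ?_) (le_sVal hν F)
    intro y hy
    have : y = x := hy
    rw [this]; exact hx

end PCaux
namespace PCaux

open TopologicalSpace Set Capacity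

variable {X : Type u} [TopologicalSpace X]

lemma sVal_top {C : Set (Capacity X)} (hne : C.Nonempty) : sVal C ⊤ = 1 := by
  obtain ⟨ν, hν⟩ := hne
  refine le_antisymm (sVal_le_one C ⊤) ?_
  rw [← ν.univ']
  exact le_sVal hν ⊤

lemma lt_oval_mono {ν μ : Capacity X} {U : Set X} {b : ℝ}
    (h : ∀ F, ν.toFun F ≤ μ.toFun F) (hb : b < ν.oval U) : b < μ.oval U := by
  obtain ⟨K, hKU, hK⟩ := exists_of_lt_oval hb
  exact lt_of_lt_of_le (lt_of_lt_of_le hK (h K)) (le_oval μ hKU)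

lemma join_mem {C : Set (Capacity X)} (hposs : ∀ ν ∈ C, IsPossibility ν)
    (heq : C = {α : Capacity X | IsPossibility α ∧ ∀ F : Closeds X,
      sInf ((fun ν : Capacity X => ν.toFun F) '' C) ≤ α.toFun F ∧
      α.toFun F ≤ sSup ((fun ν : Capacity X => ν.toFun F) '' C)})
    {ν μ : Capacity X} (hν : ν ∈ C) (hμ : μ ∈ C) : join ν μ ∈ C := by
  have h : join ν μ ∈ {α : Capacity X | IsPossibility α ∧ ∀ F : Closeds X,
      sInf ((fun ν : Capacity X => ν.toFun F) '' C) ≤ α.toFun F ∧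
      α.toFun F ≤ sSup ((fun ν : Capacity X => ν.toFun F) '' C)} := by
    refine ⟨join_poss (hposs ν hν) (hposs μ hμ), fun F => ⟨?_, ?_⟩⟩
    · exact le_trans (iVal_le hν F) (le_max_left _ _)
    · exact max_le (le_sVal hν F) (le_sVal hμ F)
  rw [heq]
  exact h

variable [T2Space X] [CompactSpace X]

/-- The pointwise supremum of a nonempty closed "interval" family of possibility
capacities is itself a member; in particular the sup-function is a capacity. -/
lemma exists_sup_mem {C : Set (Capacity X)} (hne : C.Nonempty) (hcl : IsClosed C)
    (hposs : ∀ ν ∈ C, IsPossibility ν)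
    (heq : C = {α : Capacity X | IsPossibility α ∧ ∀ F : Closeds X,
      sInf ((fun ν : Capacity X => ν.toFun F) '' C) ≤ α.toFun F ∧
      α.toFun F ≤ sSup ((fun ν : Capacity X => ν.toFun F) '' C)}) :
    ∃ σ : Capacity X, σ ∈ C ∧ ∀ F : Closeds X, σ.toFun F = sVal C F := by
  classical
  set g : X → ℝ := gd C with hg
  set gh : X → ℝ := fun x => sInf {r | ∃ O : Set X, IsOpen O ∧ x ∈ O ∧ r = sSup (g '' O)}
    with hghdef
  have hSne : ∀ x : X, {r | ∃ O : Set X, IsOpen O ∧ x ∈ O ∧ r = sSup (g '' O)}.Nonempty :=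
    fun x => ⟨sSup (g '' univ), univ, isOpen_univ, mem_univ x, rfl⟩
  have hSbb : ∀ x : X, BddBelow {r | ∃ O : Set X, IsOpen O ∧ x ∈ O ∧ r = sSup (g '' O)} := by
    intro x
    refine ⟨0, ?_⟩
    rintro r ⟨O, hO, hxO, rfl⟩
    exact sSup_image_nonneg (gd_nonneg C) O
  have hg_le : ∀ x, g x ≤ gh x := by
    intro x
    refine le_csInf (hSne x) ?_
    rintro r ⟨O, hO, hxO, rfl⟩
    exact le_csSup (sSup_image_bddAbove (gd_le_one C) O) ⟨x, hxO, rfl⟩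
  have hgh0 : ∀ x, 0 ≤ gh x := fun x => le_trans (gd_nonneg C x) (hg_le x)
  have hghle : ∀ (x : X) (O : Set X), IsOpen O → x ∈ O → gh x ≤ sSup (g '' O) :=
    fun x O hO hxO => csInf_le (hSbb x) ⟨O, hO, hxO, rfl⟩
  have hgh1 : ∀ x, gh x ≤ 1 := by
    intro x
    refine le_trans (hghle x univ isOpen_univ (mem_univ x)) (Real.sSup_le ?_ zero_le_one)
    rintro r ⟨y, -, rfl⟩
    exact gd_le_one C y
  have husc : ∀ a : ℝ, IsOpen {x | gh x < a} := by
    intro a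
    rw [isOpen_iff_forall_mem_open]
    intro x hx
    obtain ⟨r, ⟨O, hO, hxO, rfl⟩, hr⟩ := exists_lt_of_csInf_lt (hSne x) hx
    exact ⟨O, fun y hy => lt_of_le_of_lt (hghle y O hO hy) hr, hO, hxO⟩
  have hsup1 : sSup (gh '' univ) = 1 := by
    refine le_antisymm (Real.sSup_le ?_ zero_le_one) ?_
    · rintro r ⟨x, -, rfl⟩; exact hgh1 x
    · have h1 : (1:ℝ) = sVal C ⊤ := (sVal_top hne).symm
      rw [h1, sVal_eq_sup_gd hposs ⊤]
      refine Real.sSup_le ?_ (sSup_image_nonneg hgh0 _)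
      rintro r ⟨x, hx, rfl⟩
      exact le_trans (hg_le x) (le_csSup (sSup_image_bddAbove hgh1 _) ⟨x, mem_univ x, rfl⟩)
  set σ := capOfDensity gh hgh0 hgh1 husc hsup1 with hσdef
  have hσF : ∀ F : Closeds X, σ.toFun F = sSup (gh '' (F : Set X)) := fun F => rfl
  have hsVal_le : ∀ F : Closeds X, sVal C F ≤ σ.toFun F := by
    intro F
    rw [hσF, sVal_eq_sup_gd hposs]
    refine Real.sSup_le ?_ (sSup_image_nonneg hgh0 _)
    rintro r ⟨x, hx, rfl⟩
    exact le_trans (hg_le x) (le_csSup (sSup_image_bddAbove hgh1 _) ⟨x, hx, rfl⟩)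
  have hle : ∀ ν ∈ C, ∀ F : Closeds X, ν.toFun F ≤ σ.toFun F :=
    fun ν hν F => le_trans (le_sVal hν F) (hsVal_le F)
  have hmem : σ ∈ C := by
    rw [← hcl.closure_eq, mem_closure_iff]
    intro o ho hσo
    obtain ⟨v, ⟨fS, ⟨hfin, hsub⟩, rfl⟩, hσv, hvo⟩ :=
      (isTopologicalBasis_of_subbasis
        (rfl : capacityTopology X = TopologicalSpace.generateFrom _)).exists_subset_of_mem_open
        hσo ho
    have key : ∀ s ∈ fS,
        (∃ U b, IsOpen U ∧ s = {c : Capacity X | b < Capacity.oval c U}) →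
        ∃ ν₂ ∈ C, ν₂ ∈ s := by
      rintro s hs ⟨U, b, hU, rfl⟩
      have hσs : b < Capacity.oval σ U := hσv _ hs
      by_cases hb : b < 0
      · obtain ⟨ν₀, hν₀⟩ := hne
        refine ⟨ν₀, hν₀, lt_of_lt_of_le hb ?_⟩
        have h0 : ν₀.toFun ⊥ ≤ Capacity.oval ν₀ U := le_oval ν₀ (by simp)
        rwa [ν₀.empty'] at h0
      · push_neg at hb
        obtain ⟨K, hKU, hKgt⟩ := exists_of_lt_oval hσs
        rw [hσF] at hKgt
        have hKne : (gh '' (K : Set X)).Nonempty := by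
          by_contra hc
          rw [not_nonempty_iff_eq_empty] at hc
          rw [hc, Real.sSup_empty] at hKgt
          exact absurd hKgt (not_lt.2 hb)
        obtain ⟨r, ⟨x, hxK, rfl⟩, hr⟩ := exists_lt_of_lt_csSup hKne hKgt
        have hxU : x ∈ U := hKU hxK
        have h2 : b < sSup (g '' U) := lt_of_lt_of_le hr (hghle x U hU hxU)
        have hUne : (g '' U).Nonempty := ⟨g x, x, hxU, rfl⟩
        obtain ⟨r, ⟨y, hyU, rfl⟩, hry⟩ := exists_lt_of_lt_csSup hUne h2
        have hgy : (((fun ν : Capacity X => ν.toFun (sc y)) '' C)).Nonempty := hne.image _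
        obtain ⟨r, ⟨ν₂, hν₂, rfl⟩, hrν⟩ := exists_lt_of_lt_csSup hgy hry
        refine ⟨ν₂, hν₂, ?_⟩
        show b < Capacity.oval ν₂ U
        refine lt_of_lt_of_le hrν (le_oval ν₂ ?_)
        intro z hz
        have : z = y := hz
        rw [this]; exact hyU
    -- build a single witness by induction over the finite set fS
    have main : ∀ T : Set (Set (Capacity X)), T.Finite → T ⊆ fS →
        ∃ ν ∈ C, ∀ s ∈ T,
          (∃ U b, IsOpen U ∧ s = {c : Capacity X | b < Capacity.oval c U}) → ν ∈ s := by
      intro T hTfin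
      refine Set.Finite.induction_on T hTfin ?_ ?_
      · intro _
        obtain ⟨ν₀, hν₀⟩ := hne
        exact ⟨ν₀, hν₀, fun s hs => absurd hs (notMem_empty s)⟩
      · rintro s₀ T' hs₀T' hT'fin ih hins
        rw [insert_subset_iff] at hins
        obtain ⟨ν, hνC, hν⟩ := ih hins.2
        by_cases hrep : ∃ U b, IsOpen U ∧ s₀ = {c : Capacity X | b < Capacity.oval c U}
        · obtain ⟨ν₂, hν₂C, hν₂⟩ := key s₀ hins.1 hrep
          refine ⟨join ν ν₂, join_mem hposs heq hνC hν₂C, ?_⟩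
          rintro s hs hrep'
          rcases hs with rfl | hs
          · obtain ⟨U, b, hU, rfl⟩ := hrep
            have : b < Capacity.oval ν₂ U := hν₂
            exact lt_oval_mono (fun F => le_max_right _ _) this
          · obtain ⟨U', b', hU', rfl⟩ := hrep'
            have : b' < Capacity.oval ν U' := hν _ hs ⟨U', b', hU', rfl⟩
            exact lt_oval_mono (fun F => le_max_left _ _) this
        · refine ⟨ν, hνC, ?_⟩
          rintro s hs hrep'
          rcases hs with rfl | hs
          · exact absurd hrep' hrep
          · exact hν s hs hrep'
    obtain ⟨ν, hνC, hkey⟩ := main fS hfin Subset.rfl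
    refine ⟨ν, hvo ?_, hνC⟩
    intro s hs
    rcases hsub hs with ⟨F, a, haI, rfl⟩ | ⟨U, hU, b, hbI, rfl⟩
    · have hσs : σ.toFun F < a := hσv _ hs
      exact lt_of_le_of_lt (hle ν hνC F) hσs
    · exact hkey _ hs ⟨U, b, hU, rfl⟩
  exact ⟨σ, hmem, fun F => le_antisymm (le_sVal hmem F) (hsVal_le F)⟩

end PCaux
namespace PCaux

open TopologicalSpace Set Capacity

variable {X : Type u} [TopologicalSpace X] [T2Space X] [CompactSpace X]

lemma gd_usc {C : Set (Capacity X)} (hne : C.Nonempty) (hcl : IsClosed C)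
    (hposs : ∀ ν ∈ C, IsPossibility ν)
    (heq : C = {α : Capacity X | IsPossibility α ∧ ∀ F : Closeds X,
      sInf ((fun ν : Capacity X => ν.toFun F) '' C) ≤ α.toFun F ∧
      α.toFun F ≤ sSup ((fun ν : Capacity X => ν.toFun F) '' C)}) :
    ∀ a : ℝ, IsOpen {x : X | gd C x < a} := by
  obtain ⟨σ, hσC, hσ⟩ := exists_sup_mem hne hcl hposs heq
  intro a
  have hset : {x : X | gd C x < a} = {x : X | σ.toFun (sc x) < a} := by
    ext x; rw [mem_setOf_eq, mem_setOf_eq, hσ (sc x)]; exact Iff.rfl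
  rw [hset, isOpen_iff_forall_mem_open]
  intro x hx
  obtain ⟨O, hO, hxO, hB⟩ := σ.usc' (sc x) a hx
  refine ⟨O, ?_, hO, hxO rfl⟩
  intro y hy
  refine hB (sc y) ?_
  intro z hz
  have : z = y := hz
  rw [this]; exact hy

lemma gd_le_sVal {C : Set (Capacity X)} {x : X} {F : Closeds X} (hx : x ∈ (F : Set X)) :
    gd C x ≤ sVal C F := by
  refine Real.sSup_le ?_ (sVal_nonneg C F)
  rintro r ⟨ν, hν, rfl⟩
  show ν.toFun (sc x) ≤ _
  refine le_trans (ν.mono' (sc x) F ?_) (le_sVal hν F)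
  intro z hz
  have : z = x := hz
  rw [this]; exact hx

/-- The unit capacity coming from density `1`. -/
noncomputable def oneCap (hX : Nonempty X) : Capacity X :=
  capOfDensity (fun _ => 1) (fun _ => zero_le_one) (fun _ => le_refl 1)
    (fun a => by
      by_cases h : (1:ℝ) < a
      · have : {x : X | (1:ℝ) < a} = univ := eq_univ_of_forall fun x => h
        rw [this]; exact isOpen_univ
      · have : {x : X | (1:ℝ) < a} = ∅ := eq_empty_of_forall_notMem fun x hx => h hx
        rw [this]; exact isOpen_empty)
    (by
      rw [image_univ]
      have : range (fun _ : X => (1:ℝ)) = {1} := range_const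
      rw [this, csSup_singleton])

lemma oneCap_poss (hX : Nonempty X) : IsPossibility (oneCap hX) :=
  capOfDensity_poss _ _ _ _ _

lemma nonempty_X_of_capacity (c : Capacity X) : Nonempty X := by
  by_contra h
  rw [not_nonempty_iff] at h
  have hbt : (⊥ : Closeds X) = ⊤ := by
    apply SetLike.coe_injective
    show (∅ : Set X) = univ
    exact (Set.univ_eq_empty_iff.2 h).symm
  have h0 := c.empty'
  rw [hbt, c.univ'] at h0
  norm_num at h0

lemma convexU_univ : InConvexU {ν : Capacity X | IsPossibility ν} := by
  rcases isEmpty_or_nonempty (Capacity X) with he | hne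
  · left
    exact Set.eq_empty_of_isEmpty _
  · right
    obtain ⟨c⟩ := hne
    have hX : Nonempty X := nonempty_X_of_capacity c
    refine ⟨⟨oneCap hX, oneCap_poss hX⟩, isClosed_poss, fun ν h => h, ?_⟩
    ext α
    constructor
    · intro hα
      exact ⟨hα, fun F => ⟨csInf_le (val_imageBddBelow _ F) ⟨α, hα, rfl⟩,
        le_csSup (val_imageBddAbove _ F) ⟨α, hα, rfl⟩⟩⟩
    · intro hα
      exact hα.1

/-- The separation construction, given a separating coordinate. -/
lemma separate {C₁ C₂ : Set (Capacity X)}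
    (h1ne : C₁.Nonempty) (h1cl : IsClosed C₁) (h1poss : ∀ ν ∈ C₁, IsPossibility ν)
    (h1eq : C₁ = {α : Capacity X | IsPossibility α ∧ ∀ F : Closeds X,
      sInf ((fun ν : Capacity X => ν.toFun F) '' C₁) ≤ α.toFun F ∧
      α.toFun F ≤ sSup ((fun ν : Capacity X => ν.toFun F) '' C₁)})
    (h2ne : C₂.Nonempty) (h2poss : ∀ ν ∈ C₂, IsPossibility ν)
    (F₀ : Closeds X) (hsep : sVal C₁ F₀ < iVal C₂ F₀) :
    ∃ S₁ S₂ : Set (Capacity X), InConvexU S₁ ∧ InConvexU S₂ ∧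
      S₁ ∪ S₂ = {ν : Capacity X | IsPossibility ν} ∧ C₁ ∩ S₂ = ∅ ∧ C₂ ∩ S₁ = ∅ := by
  set a := (sVal C₁ F₀ + iVal C₂ F₀) / 2 with ha
  have h1lt : sVal C₁ F₀ < a := by rw [ha]; linarith
  have h2lt : a < iVal C₂ F₀ := by rw [ha]; linarith
  have ha0 : 0 < a := lt_of_le_of_lt (sVal_nonneg C₁ F₀) h1lt
  have ha1 : a < 1 := lt_of_lt_of_le h2lt (iVal_le_one h2ne F₀)
  have haI : a ∈ Icc (0:ℝ) 1 := ⟨le_of_lt ha0, le_of_lt ha1⟩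
  obtain ⟨σ, hσC, hσ⟩ := exists_sup_mem h1ne h1cl h1poss h1eq
  obtain ⟨O, hO, hFO, hB⟩ := σ.usc' F₀ a (by rw [hσ]; exact h1lt)
  obtain ⟨uu, huo, hFu, huc⟩ := normal_exists_closure_subset F₀.2 hO hFO
  set G : Closeds X := ⟨closure uu, isClosed_closure⟩ with hG
  have hsValG : sVal C₁ G < a := by
    have := hB G huc
    rwa [hσ] at this
  set S₁ := {ν : Capacity X | IsPossibility ν} ∩ {c : Capacity X | Capacity.oval c uu ≤ a}
    with hS₁
  set S₂ := {ν : Capacity X | IsPossibility ν} ∩ {c : Capacity X | a ≤ c.toFun G} with hS₂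
  have hC₁S₁ : C₁ ⊆ S₁ := by
    intro ν hν
    refine ⟨h1poss ν hν, ?_⟩
    refine oval_le ν (le_of_lt ha0) ?_
    intro K hK
    exact le_trans (ν.mono' K G (hK.trans subset_closure))
      (le_trans (le_sVal hν G) (le_of_lt hsValG))
  have hC₂S₂ : C₂ ⊆ S₂ := by
    intro ν hν
    refine ⟨h2poss ν hν, ?_⟩
    refine le_trans (le_of_lt h2lt) (le_trans (iVal_le hν F₀) (ν.mono' F₀ G ?_))
    exact hFu.trans subset_closure
  have hS₁cl : IsClosed S₁ := by
    refine isClosed_poss.inter ?_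
    have : {c : Capacity X | Capacity.oval c uu ≤ a} =
        {c : Capacity X | a < Capacity.oval c uu}ᶜ := by
      ext c; simp [not_lt]
    rw [this]
    exact (isOpen_Oplus huo haI).isClosed_compl
  have hS₂cl : IsClosed S₂ := by
    refine isClosed_poss.inter ?_
    have : {c : Capacity X | a ≤ c.toFun G} = {c : Capacity X | c.toFun G < a}ᶜ := by
      ext c; simp [not_lt]
    rw [this]
    exact (isOpen_Ominus G haI).isClosed_compl
  have hS₁ne : S₁.Nonempty := h1ne.mono hC₁S₁
  have hS₂ne : S₂.Nonempty := h2ne.mono hC₂S₂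
  refine ⟨S₁, S₂, ?_, ?_, ?_, ?_, ?_⟩
  · -- InConvexU S₁
    refine Or.inr ⟨hS₁ne, hS₁cl, fun ν h => h.1, ?_⟩
    ext α
    constructor
    · intro hα
      exact ⟨hα.1, fun F => ⟨csInf_le (val_imageBddBelow _ F) ⟨α, hα, rfl⟩,
        le_csSup (val_imageBddAbove _ F) ⟨α, hα, rfl⟩⟩⟩
    · rintro ⟨hp, hb⟩
      refine ⟨hp, ?_⟩
      show Capacity.oval α uu ≤ a
      refine oval_le α (le_of_lt ha0) ?_
      intro K hK
      refine le_trans (hb K).2 (Real.sSup_le ?_ (le_of_lt ha0))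
      rintro r ⟨ν, hν, rfl⟩
      exact le_trans (le_oval ν hK) hν.2
  · -- InConvexU S₂
    refine Or.inr ⟨hS₂ne, hS₂cl, fun ν h => h.1, ?_⟩
    ext α
    constructor
    · intro hα
      exact ⟨hα.1, fun F => ⟨csInf_le (val_imageBddBelow _ F) ⟨α, hα, rfl⟩,
        le_csSup (val_imageBddAbove _ F) ⟨α, hα, rfl⟩⟩⟩
    · rintro ⟨hp, hb⟩
      refine ⟨hp, ?_⟩
      show a ≤ α.toFun G
      refine le_trans ?_ (hb G).1
      refine le_csInf (hS₂ne.image _) ?_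
      rintro r ⟨ν, hν, rfl⟩
      exact hν.2
  · -- union
    apply Subset.antisymm
    · rintro c (hc | hc) <;> exact hc.1
    · intro c hc
      by_cases h : a ≤ c.toFun G
      · exact Or.inr ⟨hc, h⟩
      · push_neg at h
        refine Or.inl ⟨hc, ?_⟩
        refine oval_le c (le_of_lt ha0) ?_
        intro K hK
        exact le_trans (c.mono' K G (hK.trans subset_closure)) (le_of_lt h)
  · -- C₁ ∩ S₂ = ∅
    rw [eq_empty_iff_forall_notMem]
    rintro ν ⟨hν₁, -, hν₂⟩
    have : ν.toFun G < a := lt_of_le_of_lt (le_sVal hν₁ G) hsValG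
    exact absurd hν₂ (not_le.2 this)
  · -- C₂ ∩ S₁ = ∅
    rw [eq_empty_iff_forall_notMem]
    rintro ν ⟨hν₂, -, hν₁⟩
    have : a < Capacity.oval ν uu :=
      lt_of_lt_of_le h2lt (le_trans (iVal_le hν₂ F₀) (le_oval ν hFu))
    exact absurd hν₁ (not_le.2 this)

end PCaux
namespace PCaux

open TopologicalSpace Set Capacity

variable {X : Type u} [TopologicalSpace X] [T2Space X] [CompactSpace X]

/-- Lower-bound estimate: if there is no separating coordinate between `C` and `C'`,
then the min-density dominates the lower envelope of `C'`. -/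
lemma lower_aux {C C' : Set (Capacity X)}
    (hCposs : ∀ ν ∈ C, IsPossibility ν)
    (hC'ne : C'.Nonempty) (hC'poss : ∀ ν ∈ C', IsPossibility ν)
    (husc' : ∀ a : ℝ, IsOpen {x : X | gd C' x < a})
    (hsep : ∀ K : Closeds X, iVal C' K ≤ sVal C K)
    (f : X → ℝ) (hf : ∀ x, min (gd C x) (gd C' x) ≤ f x) (hf1 : ∀ x, f x ≤ 1)
    (F : Closeds X) : iVal C' F ≤ sSup (f '' (F : Set X)) := by
  have hkey : ∀ t : ℝ, 0 ≤ t → t < iVal C' F → t ≤ sSup (f '' (F : Set X)) := by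
    intro t ht0 htlt
    set t' := (t + iVal C' F) / 2 with ht'
    have htt' : t < t' := by rw [ht']; linarith
    have ht'lt : t' < iVal C' F := by rw [ht']; linarith
    have ht'0 : 0 ≤ t' := le_trans ht0 (le_of_lt htt')
    set K' : Closeds X := ⟨(F : Set X) ∩ {x : X | t' ≤ gd C' x},
      F.2.inter (by
        have : {x : X | t' ≤ gd C' x} = {x : X | gd C' x < t'}ᶜ := by
          ext x; simp [not_lt]
        rw [this]; exact (husc' t').isClosed_compl)⟩ with hK'
    have hK'lb : ∀ ν ∈ C', t' ≤ ν.toFun K' := by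
      intro ν hν
      have hνF : t' < ν.toFun F := lt_of_lt_of_le ht'lt (iVal_le hν F)
      rw [poss_toFun_eq_sSup_density (hC'poss ν hν) F] at hνF
      have hne2 : ((fun x => ν.toFun (sc x)) '' (F : Set X)).Nonempty := by
        by_contra hc
        rw [not_nonempty_iff_eq_empty] at hc
        rw [hc, Real.sSup_empty] at hνF
        linarith
      obtain ⟨r, ⟨x, hxF, rfl⟩, hr⟩ := exists_lt_of_lt_csSup hne2 hνF
      have hgx : t' < gd C' x := lt_of_lt_of_le hr (le_sVal hν (sc x))
      have hxK' : x ∈ (K' : Set X) := ⟨hxF, le_of_lt hgx⟩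
      refine le_trans (le_of_lt hr) (ν.mono' (sc x) K' ?_)
      intro z hz
      have : z = x := hz
      rw [this]; exact hxK'
    have hiK' : t' ≤ iVal C' K' := by
      refine le_csInf (hC'ne.image _) ?_
      rintro r ⟨ν, hν, rfl⟩
      exact hK'lb ν hν
    have hsK' : t' ≤ sVal C K' := le_trans hiK' (hsep K')
    rw [sVal_eq_sup_gd hCposs K'] at hsK'
    have hKne : (gd C '' (K' : Set X)).Nonempty := by
      by_contra hc
      rw [not_nonempty_iff_eq_empty] at hc
      rw [hc, Real.sSup_empty] at hsK'
      linarith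
    obtain ⟨r, ⟨x, hxK', rfl⟩, hr⟩ := exists_lt_of_lt_csSup hKne (lt_of_lt_of_le htt' hsK')
    have hfx : t ≤ f x := by
      refine le_trans ?_ (hf x)
      refine le_min (le_of_lt hr) (le_trans (le_of_lt htt') hxK'.2)
    exact le_trans hfx (le_csSup (sSup_image_bddAbove hf1 _) ⟨x, hxK'.1, rfl⟩)
  have hs0 : 0 ≤ sSup (f '' (F : Set X)) := by
    refine Real.sSup_nonneg ?_
    rintro r ⟨x, hx, rfl⟩
    exact le_trans (le_min (gd_nonneg C x) (gd_nonneg C' x)) (hf x)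
  by_cases h0 : iVal C' F ≤ 0
  · exact le_trans h0 hs0
  · push_neg at h0
    by_contra hcon
    push_neg at hcon
    set t := (sSup (f '' (F : Set X)) + iVal C' F) / 2 with ht
    have h1 : sSup (f '' (F : Set X)) < t := by rw [ht]; linarith
    have h2 : t < iVal C' F := by rw [ht]; linarith
    have := hkey t (le_trans hs0 (le_of_lt h1)) h2
    linarith

end PCaux
/-- the convexity `C_{∪X}` on `M_∪X` is normal: disjoint members can be
separated by two members covering `M_∪X`. -/
theorem convexity_on_possibility_capacities_normal (X : Type u) [TopologicalSpace X]
    [CompactSpace X] [T2Space X]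
    (C₁ C₂ : Set (Capacity X)) (h₁ : InConvexU C₁) (h₂ : InConvexU C₂)
    (hdisj : C₁ ∩ C₂ = ∅) :
    ∃ S₁ S₂ : Set (Capacity X), InConvexU S₁ ∧ InConvexU S₂ ∧
      S₁ ∪ S₂ = {ν : Capacity X | IsPossibility ν} ∧ C₁ ∩ S₂ = ∅ ∧ C₂ ∩ S₁ = ∅ := by
  classical
  rcases h₁ with h1e | ⟨h1ne, h1cl, h1poss, h1eq⟩
  · refine ⟨∅, {ν : Capacity X | IsPossibility ν}, Or.inl rfl, PCaux.convexU_univ, ?_, ?_, ?_⟩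
    · rw [Set.empty_union]
    · rw [h1e, Set.empty_inter]
    · rw [Set.inter_empty]
  rcases h₂ with h2e | ⟨h2ne, h2cl, h2poss, h2eq⟩
  · refine ⟨{ν : Capacity X | IsPossibility ν}, ∅, PCaux.convexU_univ, Or.inl rfl, ?_, ?_, ?_⟩
    · rw [Set.union_empty]
    · rw [Set.inter_empty]
    · rw [h2e, Set.empty_inter]
  by_cases hsep1 : ∃ F : Closeds X, PCaux.sVal C₁ F < PCaux.iVal C₂ F
  · obtain ⟨F₀, hF₀⟩ := hsep1
    exact PCaux.separate h1ne h1cl h1poss h1eq h2ne h2poss F₀ hF₀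
  by_cases hsep2 : ∃ F : Closeds X, PCaux.sVal C₂ F < PCaux.iVal C₁ F
  · obtain ⟨F₀, hF₀⟩ := hsep2
    obtain ⟨S₁, S₂, hS₁, hS₂, hun, hd1, hd2⟩ :=
      PCaux.separate h2ne h2cl h2poss h2eq h1ne h1poss F₀ hF₀
    exact ⟨S₂, S₁, hS₂, hS₁, by rw [Set.union_comm]; exact hun, hd2, hd1⟩
  exfalso
  push_neg at hsep1 hsep2
  have husc1 := PCaux.gd_usc h1ne h1cl h1poss h1eq
  have husc2 := PCaux.gd_usc h2ne h2cl h2poss h2eq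
  set f : X → ℝ := fun x => min (PCaux.gd C₁ x) (PCaux.gd C₂ x) with hfdef
  have hf0 : ∀ x, 0 ≤ f x := fun x => le_min (PCaux.gd_nonneg _ x) (PCaux.gd_nonneg _ x)
  have hf1 : ∀ x, f x ≤ 1 := fun x => le_trans (min_le_left _ _) (PCaux.gd_le_one _ x)
  have husc : ∀ a : ℝ, IsOpen {x : X | f x < a} := by
    intro a
    have h : {x : X | f x < a} = {x | PCaux.gd C₁ x < a} ∪ {x | PCaux.gd C₂ x < a} := by
      ext x
      simp only [hfdef, mem_setOf_eq, mem_union, min_lt_iff]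
    rw [h]
    exact (husc1 a).union (husc2 a)
  have hlow2 : ∀ F : Closeds X, PCaux.iVal C₂ F ≤ sSup (f '' (F : Set X)) :=
    fun F => PCaux.lower_aux h1poss h2ne h2poss husc2 hsep1 f (fun x => le_refl _) hf1 F
  have hlow1 : ∀ F : Closeds X, PCaux.iVal C₁ F ≤ sSup (f '' (F : Set X)) := by
    intro F
    refine PCaux.lower_aux h2poss h1ne h1poss husc1 hsep2 f ?_ hf1 F
    intro x
    rw [min_comm]
  have hsupf : sSup (f '' univ) = 1 := by
    refine le_antisymm (Real.sSup_le ?_ zero_le_one) ?_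
    · rintro r ⟨x, -, rfl⟩; exact hf1 x
    · have h := hlow2 ⊤
      rw [PCaux.iVal_top h2ne] at h
      have hcoe : (((⊤ : Closeds X)) : Set X) = univ := rfl
      rwa [hcoe] at h
  set α := PCaux.capOfDensity f hf0 hf1 husc hsupf with hαdef
  have hαposs := PCaux.capOfDensity_poss f hf0 hf1 husc hsupf
  have hαF : ∀ F : Closeds X, α.toFun F = sSup (f '' (F : Set X)) := fun F => rfl
  have hupper : ∀ (C : Set (Capacity X)) (F : Closeds X), (∀ x, f x ≤ PCaux.gd C x) →
      α.toFun F ≤ PCaux.sVal C F := by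
    intro C F hfg
    rw [hαF]
    refine Real.sSup_le ?_ (PCaux.sVal_nonneg C F)
    rintro r ⟨x, hx, rfl⟩
    exact le_trans (hfg x) (PCaux.gd_le_sVal hx)
  have hmem1 : α ∈ C₁ := by
    rw [h1eq]
    refine ⟨hαposs, fun F => ⟨?_, hupper C₁ F (fun x => min_le_left _ _)⟩⟩
    rw [hαF F]
    exact hlow1 F
  have hmem2 : α ∈ C₂ := by
    rw [h2eq]
    refine ⟨hαposs, fun F => ⟨?_, hupper C₂ F (fun x => min_le_right _ _)⟩⟩
    rw [hαF F]
    exact hlow2 F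
  rw [Set.eq_empty_iff_forall_notMem] at hdisj
  exact hdisj α ⟨hmem1, hmem2⟩
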